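/- Let d ≥ 1 and k ≥ 0 be integers, let G be a graph, and let U ⊆ V(G) with at most k non-edges inside U (i.e., G[U] becomes complete after adding at most k edges). Then for every induced subgraph F of G that is properly d-colorable, |U ∩ V(F)| ≤ (3d + √(d² + 8dk))/2. -/
import Mathlib


/-- Let `d ≥ 1`, `k ≥ 0`, `G` a graph and `U` a vertex set spanning at most `k`
non-edges. Then for every set `S` inducing a properly `d`-colorable subgraph of
`G`, `|U ∩ S| ≤ (3d + √(d² + 8dk))/2.` -/
theorem stmt3 {V : Type*} [Fintype V] (G : SimpleGraph V) (d k : ℕ) (hd : 1 ≤ d)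
    (U : Set V) (hk : {e ∈ Gᶜ.edgeSet | ∀ v ∈ e, v ∈ U}.ncard ≤ k)
    (S : Set V)
    (hcol : ∃ c : V → Fin d, ∀ u ∈ S, ∀ v ∈ S, G.Adj u v → c u ≠ c v) :
    ((U ∩ S).ncard : ℝ) ≤ (3 * d + Real.sqrt ((d : ℝ) ^ 2 + 8 * d * k)) / 2 := by
  classical
  obtain ⟨c, hc⟩ := hcol
  have hfin : (U ∩ S).Finite := Set.toFinite _
  set t : Finset V := hfin.toFinset with ht
  have hmem : ∀ v, v ∈ t ↔ v ∈ U ∧ v ∈ S := by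
    intro v
    rw [ht, Set.Finite.mem_toFinset, Set.mem_inter_iff]
  set m : ℕ := t.card with hm
  have hncard : (U ∩ S).ncard = m := Set.ncard_eq_toFinset_card _ hfin
  -- fiber sizes
  set n : Fin d → ℕ := fun i => (t.filter (fun v => c v = i)).card with hn
  have hsum : ∑ i, n i = m := (Finset.card_eq_sum_card_fiberwise
    (fun v _ => Finset.mem_univ (c v))).symm
  -- monochromatic ordered pairs
  set Q' : Finset (V × V) := (t ×ˢ t).filter (fun p => c p.1 = c p.2) with hQ'
  have hQ'card : Q'.card = ∑ i, (n i) ^ 2 := by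
    rw [hQ']
    rw [Finset.card_eq_sum_card_fiberwise
      (f := fun p : V × V => c p.1) (t := Finset.univ) (fun p _ => Finset.mem_univ _)]
    refine Finset.sum_congr rfl fun i _ => ?_
    have : ((t ×ˢ t).filter (fun p => c p.1 = c p.2)).filter (fun p : V × V => c p.1 = i)
        = (t.filter (fun v => c v = i)) ×ˢ (t.filter (fun v => c v = i)) := by
      ext ⟨a, b⟩
      simp only [Finset.mem_filter, Finset.mem_product]
      constructor
      · rintro ⟨⟨⟨ha, hb⟩, hab⟩, hai⟩
        exact ⟨⟨ha, hai⟩, hb, hab ▸ hai⟩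
      · rintro ⟨⟨ha, hai⟩, hb, hbi⟩
        exact ⟨⟨⟨ha, hb⟩, hai.trans hbi.symm⟩, hai⟩
    rw [this, Finset.card_product, sq]
  -- split off the diagonal
  set Q : Finset (V × V) := Q'.filter (fun p => p.1 ≠ p.2) with hQ
  have hdiag : (Q'.filter (fun p => p.1 = p.2)).card = m := by
    rw [hm]
    apply Finset.card_bij (fun p _ => p.1)
    · rintro ⟨a, b⟩ hp
      simp only [hQ', Finset.mem_filter, Finset.mem_product] at hp
      exact hp.1.1.1
    · rintro ⟨a, b⟩ hp ⟨a', b'⟩ hp' h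
      simp only [hQ', Finset.mem_filter, Finset.mem_product] at hp hp'
      have h1 : a = b := hp.2
      have h2 : a' = b' := hp'.2
      simp_all
    · intro a ha
      refine ⟨(a, a), ?_, rfl⟩
      simp [hQ', ha]
  have hsplit : Q.card + m = ∑ i, (n i) ^ 2 := by
    have h := Finset.card_filter_add_card_filter_not (s := Q')
      (p := fun p : V × V => p.1 = p.2)
    have hQne : Q.card = (Q'.filter (fun p : V × V => ¬ p.1 = p.2)).card := by
      rw [hQ]
    rw [← hQ'card, ← hdiag, hQne]
    omega
  -- each element of Q gives a non-edge inside U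
  have hQk : Q.card ≤ 2 * k := by
    set E : Set (Sym2 V) := {e ∈ Gᶜ.edgeSet | ∀ v ∈ e, v ∈ U} with hE
    have hEfin : E.Finite := Set.toFinite _
    have himg : Q.image (fun p : V × V => s(p.1, p.2)) ⊆ hEfin.toFinset := by
      intro e he
      obtain ⟨⟨a, b⟩, hp, rfl⟩ := Finset.mem_image.mp he
      simp only [hQ, hQ', Finset.mem_filter, Finset.mem_product] at hp
      obtain ⟨⟨⟨ha, hb⟩, hcab⟩, hne⟩ := hp
      rw [hmem] at ha hb
      have hnadj : ¬ G.Adj a b := fun h => hc a ha.2 b hb.2 h hcab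
      rw [Set.Finite.mem_toFinset]
      refine ⟨?_, ?_⟩
      · rw [SimpleGraph.mem_edgeSet]
        exact ⟨hne, hnadj⟩
      · intro v hv
        rw [Sym2.mem_iff] at hv
        rcases hv with rfl | rfl
        · exact ha.1
        · exact hb.1
    have hfib : ∀ e ∈ Q.image (fun p : V × V => s(p.1, p.2)),
        (Q.filter (fun p => s(p.1, p.2) = e)).card ≤ 2 := by
      intro e he
      obtain ⟨⟨a, b⟩, _, rfl⟩ := Finset.mem_image.mp he
      have : Q.filter (fun p : V × V => s(p.1, p.2) = s(a, b)) ⊆ {(a, b), (b, a)} := by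
        intro ⟨x, y⟩ hx
        simp only [Finset.mem_filter] at hx
        have := Sym2.eq_iff.mp hx.2
        simp only [Finset.mem_insert, Finset.mem_singleton, Prod.mk.injEq]
        tauto
      calc (Q.filter (fun p : V × V => s(p.1, p.2) = s(a, b))).card
          ≤ ({(a, b), (b, a)} : Finset (V × V)).card := Finset.card_le_card this
        _ ≤ 2 := Finset.card_insert_le _ _ |>.trans (by simp)
    calc Q.card ≤ 2 * (Q.image (fun p : V × V => s(p.1, p.2))).card :=
          Finset.card_le_mul_card_image _ 2 hfib
      _ ≤ 2 * hEfin.toFinset.card := by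
          exact Nat.mul_le_mul_left 2 (Finset.card_le_card himg)
      _ = 2 * E.ncard := by rw [Set.ncard_eq_toFinset_card _ hEfin]
      _ ≤ 2 * k := Nat.mul_le_mul_left 2 hk
  -- Cauchy–Schwarz : m^2 ≤ d * ∑ n i ^ 2
  have hCS : (m : ℝ) ^ 2 ≤ d * (2 * k + m) := by
    have h1 : ((m : ℝ)) ^ 2 ≤ (d : ℝ) * ∑ i, ((n i : ℝ)) ^ 2 := by
      have := sq_sum_le_card_mul_sum_sq (s := (Finset.univ : Finset (Fin d)))
        (f := fun i => (n i : ℝ))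
      simpa [hsum, ← Nat.cast_sum] using this
    have h2 : (∑ i, ((n i : ℝ)) ^ 2) = ((∑ i, (n i) ^ 2 : ℕ) : ℝ) := by
      push_cast; ring
    have h3 : ((∑ i, (n i) ^ 2 : ℕ) : ℝ) ≤ 2 * k + m := by
      rw [← hsplit]
      push_cast
      have : (Q.card : ℝ) ≤ 2 * k := by exact_mod_cast hQk
      linarith
    calc (m : ℝ) ^ 2 ≤ (d : ℝ) * ∑ i, ((n i : ℝ)) ^ 2 := h1
      _ = (d : ℝ) * ((∑ i, (n i) ^ 2 : ℕ) : ℝ) := by rw [h2]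
      _ ≤ d * (2 * k + m) := by
          have hd0 : (0 : ℝ) ≤ d := Nat.cast_nonneg d
          nlinarith [h3]
  -- conclude using the quadratic bound
  rw [hncard]
  set s := Real.sqrt ((d : ℝ) ^ 2 + 8 * d * k) with hs
  have hs2 : s ^ 2 = (d : ℝ) ^ 2 + 8 * d * k := Real.sq_sqrt (by positivity)
  have hs0 : (0 : ℝ) ≤ s := Real.sqrt_nonneg _
  have hd1 : (1 : ℝ) ≤ d := by exact_mod_cast hd
  have hsd : (d : ℝ) ≤ s := by
    nlinarith [hs2, hs0, hd1, mul_nonneg (Nat.cast_nonneg (α := ℝ) d) (Nat.cast_nonneg (α := ℝ) k)]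
  nlinarith [sq_nonneg (2 * (m : ℝ) - d - s), hCS, hs2, hs0, hsd, hd1]
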